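/- Let G=(V,E) be a bipartite graph whose sides are the terminal set T and the non-terminal set V∖T, with every pair of terminals k-element-connected, where k > r. Let C be a cutset of at most r vertices and V' the vertex set of a connected component of G − C containing at least r and at most 2r terminals, let C' = C ∩ T be the terminals in C (which is nonempty), and let G' = G[V' ∪ C']. Then G' contains at least r and at most 3r terminals, and every terminal in V' is at least k/r-element-connected in G' to some terminal of C'. -/
import Mathlib


open SimpleGraph

/-- Two walks between the same pair of vertices are *element-disjoint* with respect to a
terminal set `T` if they share no edges and every common vertex is a terminal or an
endpoint. -/
def ElemDisjWalks {V : Type*} (T : Set V) {G : SimpleGraph V} {u v : V}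
    (W₁ W₂ : G.Walk u v) : Prop :=
  (∀ e, e ∈ W₁.edges → e ∉ W₂.edges) ∧
  (∀ x, x ∈ W₁.support → x ∈ W₂.support → x ∈ T ∪ {u, v})

/-- There exist `k` pairwise element-disjoint `u`-`v` paths in `G`
(with respect to the terminal set `T`). -/
def HasElemPaths {V : Type*} (G : SimpleGraph V) (T : Set V) (u v : V) (k : ℕ) : Prop :=
  ∃ P : Fin k → G.Walk u v, (∀ i, (P i).IsPath) ∧
    ∀ i j, i ≠ j → ElemDisjWalks T (P i) (P j)

/-- The element-connectivity `κ'_G(u,v)`: the maximum number of `u`-`v` paths that are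
pairwise disjoint in edges and in non-terminal vertices. -/
noncomputable def elemConn {V : Type*} (G : SimpleGraph V) (T : Set V) (u v : V) : ℕ :=
  sSup {k | HasElemPaths G T u v k}

/-- The graph `G - S` obtained by deleting the vertex set `S` (kept on the same vertex
type; deleted vertices simply become isolated). -/
def delVerts {V : Type*} (G : SimpleGraph V) (S : Set V) : SimpleGraph V :=
  SimpleGraph.fromRel (fun a b => G.Adj a b ∧ a ∉ S ∧ b ∉ S)

lemma hasElemPaths_mono {V : Type*} {G : SimpleGraph V} {T : Set V} {u v : V} {m n : ℕ}
    (h : HasElemPaths G T u v n) (hmn : m ≤ n) : HasElemPaths G T u v m := by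
  obtain ⟨P, hP, hD⟩ := h
  exact ⟨fun i => P (Fin.castLE hmn i), fun i => hP _,
    fun i j hij => hD _ _ (by simpa using fun h => hij (Fin.castLE_injective hmn h))⟩

lemma edges_ne_nil {V : Type*} {G : SimpleGraph V} {u v : V} (p : G.Walk u v)
    (huv : u ≠ v) : p.edges ≠ [] := by
  cases p with
  | nil => exact absurd rfl huv
  | cons h p => simp [SimpleGraph.Walk.edges_cons]

lemma bddAbove_hasElemPaths {V : Type*} [Fintype V] {G : SimpleGraph V} {T : Set V}
    {u v : V} (huv : u ≠ v) : BddAbove {n | HasElemPaths G T u v n} := by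
  classical
  refine ⟨Fintype.card (Sym2 V), fun n hn => ?_⟩
  obtain ⟨P, hP, hD⟩ := hn
  have hinj : Function.Injective (fun i => (P i).edges.head (edges_ne_nil _ huv)) := by
    intro i j hij
    by_contra hne
    have h1 : (P i).edges.head (edges_ne_nil _ huv) ∈ (P i).edges := List.head_mem _
    have h2 : (P i).edges.head (edges_ne_nil _ huv) ∈ (P j).edges := by
      have : (P i).edges.head (edges_ne_nil _ huv) = (P j).edges.head (edges_ne_nil _ huv) := hij
      rw [this]; exact List.head_mem _
    exact (hD i j hne).1 _ h1 h2
  simpa using Fintype.card_le_of_injective _ hinj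

lemma hasElemPaths_of_le_elemConn {V : Type*} [Fintype V] {G : SimpleGraph V} {T : Set V}
    {u v : V} {k : ℕ} (huv : u ≠ v) (h : k ≤ elemConn G T u v) : HasElemPaths G T u v k := by
  have hne : {n | HasElemPaths G T u v n}.Nonempty :=
    ⟨0, ⟨fun i => i.elim0, fun i => i.elim0, fun i => i.elim0⟩⟩
  have := Nat.sSup_mem hne (bddAbove_hasElemPaths huv)
  exact hasElemPaths_mono this h

lemma trunc_walk {V : Type*} {G : SimpleGraph V} {C V' : Set V}
    (hclose : ∀ x ∈ V', ∀ y, y ∉ C → G.Adj x y → y ∈ V')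
    (hVC : ∀ x ∈ V', x ∉ C) :
    ∀ {a c : V} (W : G.Walk a c), a ∈ V' → c ∈ C →
    ∃ (w : V) (Q : G.Walk a w), w ∈ C ∧ (∀ e ∈ Q.edges, e ∈ W.edges) ∧
      (∀ x ∈ Q.support, x ∈ W.support) ∧ (∀ x ∈ Q.support, x = w ∨ x ∈ V') ∧
      (W.IsPath → Q.IsPath) := by
  intro a c W
  induction W with
  | nil =>
    intro ha hc
    exact absurd hc (hVC _ ha)
  | @cons a b c hab W ih =>
    intro ha hc
    by_cases hb : b ∈ C
    · refine ⟨b, Walk.cons hab Walk.nil, hb, ?_, ?_, ?_, ?_⟩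
      · intro e he; simp only [Walk.edges_cons, Walk.edges_nil, List.mem_singleton] at he
        simp [he]
      · intro x hx
        simp only [Walk.support_cons, Walk.support_nil, List.mem_cons, List.mem_singleton] at hx
        rcases hx with rfl | rfl | h
        · simp
        · simp [Walk.support_cons]
        · exact absurd h (by simp)
      · intro x hx
        simp only [Walk.support_cons, Walk.support_nil, List.mem_cons, List.mem_singleton] at hx
        rcases hx with rfl | rfl | h
        · exact Or.inr ha
        · exact Or.inl rfl
        · exact absurd h (by simp)
      · intro _
        rw [Walk.cons_isPath_iff]
        exact ⟨Walk.IsPath.nil, by simp [hab.ne]⟩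
    · have hbV' : b ∈ V' := hclose _ ha _ hb hab
      obtain ⟨w, Q, hw, hQe, hQs, hQV, hQp⟩ := ih hbV' hc
      refine ⟨w, Walk.cons hab Q, hw, ?_, ?_, ?_, ?_⟩
      · intro e he
        simp only [Walk.edges_cons, List.mem_cons] at he ⊢
        exact he.imp id (hQe e)
      · intro x hx
        simp only [Walk.support_cons, List.mem_cons] at hx ⊢
        exact hx.imp id (hQs x)
      · intro x hx
        simp only [Walk.support_cons, List.mem_cons] at hx
        rcases hx with rfl | hx
        · exact Or.inr ha
        · exact hQV x hx
      · intro hp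
        rw [Walk.cons_isPath_iff] at hp ⊢
        exact ⟨hQp hp.1, fun h => hp.2 (hQs _ h)⟩

lemma pigeon {V : Type*} [DecidableEq V] {k r : ℕ} (t : Finset V) (ht : t.card ≤ r)
    (hk : 0 < k) (f : Fin k → V) (hf : ∀ i, f i ∈ t) :
    ∃ w ∈ t, k ≤ r * (Finset.univ.filter (fun i => f i = w)).card := by
  classical
  have htne : t.Nonempty := ⟨f ⟨0, hk⟩, hf _⟩
  have htpos : 0 < t.card := Finset.card_pos.mpr htne
  set q := (k - 1) / t.card with hq
  have hlt : t.card * q < (Finset.univ : Finset (Fin k)).card := by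
    have h1 : t.card * q ≤ k - 1 := by
      rw [hq, mul_comm]; exact Nat.div_mul_le_self _ _
    have : k - 1 < k := Nat.sub_lt hk one_pos
    simpa using lt_of_le_of_lt h1 this
  obtain ⟨w, hw, hwlt⟩ := Finset.exists_lt_card_fiber_of_mul_lt_card_of_maps_to
    (fun a _ => hf a) hlt
  refine ⟨w, hw, ?_⟩
  have h2 : q + 1 ≤ (Finset.univ.filter (fun i => f i = w)).card := hwlt
  have h3 : k ≤ t.card * (q + 1) := by
    rw [hq]
    have := Nat.lt_mul_div_succ (k - 1) htpos
    omega
  calc k ≤ t.card * (q + 1) := h3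
    _ ≤ r * (Finset.univ.filter (fun i => f i = w)).card :=
        Nat.mul_le_mul ht h2

/-- Let `G` be bipartite with sides `T` (terminals) and `V \ T`, every pair of terminals
`k`-element-connected, `k > r`.  Let `C` be a cutset of at most `r` vertices, `V'` the
vertex set of a connected component of `G - C` containing between `r` and `2r`
terminals, `C' = C ∩ T` (nonempty), and `G' = G[V' ∪ C']` (realized as `delVerts G`
of the complement of `V' ∪ C'`).  Then `G'` contains between `r` and `3r` terminals,
and every terminal of `V'` is at least `k/r`-element-connected in `G'` to some terminal
of `C'`. -/
theorem component_terminals_connected_to_cut {V : Type*} [Fintype V]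
    (G : SimpleGraph V) (T : Set V) (k r : ℕ)
    (hbip : ∀ u v, G.Adj u v → (u ∈ T ↔ v ∉ T))
    (hconn : ∀ u ∈ T, ∀ v ∈ T, u ≠ v → k ≤ elemConn G T u v)
    (hkr : r < k)
    (C : Set V) (hCcard : C.ncard ≤ r) (hcut : ¬ (G.induce Cᶜ).Connected)
    (V' : Set V)
    (hV' : ∃ comp : (G.induce Cᶜ).ConnectedComponent,
      V' = Subtype.val '' {x : ↥Cᶜ | (G.induce Cᶜ).connectedComponentMk x = comp})
    (hV'lo : r ≤ (V' ∩ T).ncard) (hV'hi : (V' ∩ T).ncard ≤ 2 * r)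
    (hC' : (C ∩ T).Nonempty) :
    (r ≤ ((V' ∪ C ∩ T) ∩ T).ncard ∧ ((V' ∪ C ∩ T) ∩ T).ncard ≤ 3 * r) ∧
    ∀ t ∈ V' ∩ T, ∃ c ∈ C ∩ T,
      (k : ℝ) / (r : ℝ) ≤ (elemConn (delVerts G ((V' ∪ C ∩ T)ᶜ)) T t c : ℝ) := by
  classical
  obtain ⟨comp, hcomp⟩ := hV'
  have hV'C : ∀ x ∈ V', x ∉ C := by
    intro x hx
    rw [hcomp] at hx
    obtain ⟨x', _, rfl⟩ := hx
    exact x'.2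
  have hclose : ∀ x ∈ V', ∀ y, y ∉ C → G.Adj x y → y ∈ V' := by
    intro x hx y hy hadj
    rw [hcomp] at hx ⊢
    obtain ⟨x', hx', rfl⟩ := hx
    refine ⟨⟨y, hy⟩, ?_, rfl⟩
    have hadj' : (G.induce Cᶜ).Adj x' ⟨y, hy⟩ := by
      simp only [comap_adj, Function.Embedding.coe_subtype]
      exact hadj
    simp only [Set.mem_setOf_eq] at hx' ⊢
    rw [← hx']
    exact (SimpleGraph.ConnectedComponent.connectedComponentMk_eq_of_adj hadj').symm
  have hsetEq : (V' ∪ C ∩ T) ∩ T = (V' ∩ T) ∪ (C ∩ T) := by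
    rw [Set.union_inter_distrib_right, Set.inter_assoc, Set.inter_self]
  constructor
  · constructor
    · refine le_trans hV'lo (Set.ncard_le_ncard ?_ (Set.toFinite _))
      rw [hsetEq]; exact Set.subset_union_left
    · rw [hsetEq]
      calc ((V' ∩ T) ∪ (C ∩ T)).ncard ≤ (V' ∩ T).ncard + (C ∩ T).ncard :=
          Set.ncard_union_le _ _
        _ ≤ 2 * r + r := add_le_add hV'hi
            (le_trans (Set.ncard_le_ncard Set.inter_subset_left (Set.toFinite _)) hCcard)
        _ = 3 * r := by ring
  intro t ht
  obtain ⟨htV', htT⟩ := ht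
  obtain ⟨c₀, hc₀C, hc₀T⟩ := hC'
  have htc₀ : t ≠ c₀ := fun h => hV'C t htV' (h ▸ hc₀C)
  have hk0 : 0 < k := lt_of_le_of_lt (Nat.zero_le r) hkr
  obtain ⟨P, hP, hD⟩ := hasElemPaths_of_le_elemConn htc₀
    (hconn t htT c₀ hc₀T htc₀)
  choose w Q hw hQe hQs hQV hQp using fun i =>
    trunc_walk hclose hV'C (P i) htV' hc₀C
  have hCfcard : (Set.toFinite C).toFinset.card ≤ r := by
    rw [← Set.ncard_eq_toFinset_card]; exact hCcard
  obtain ⟨w₀, hw₀Cf, hkm⟩ := pigeon _ hCfcard hk0 w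
    (fun i => (Set.Finite.mem_toFinset _).mpr (hw i))
  have hw₀C : w₀ ∈ C := (Set.Finite.mem_toFinset _).mp hw₀Cf
  set I := Finset.univ.filter (fun i => w i = w₀) with hI
  set m := I.card with hm
  have hr0 : 0 < r := by
    rcases Nat.eq_zero_or_pos r with h | h
    · subst h; simp at hkm; omega
    · exact h
  have hm2 : 2 ≤ m := by
    by_contra h
    push_neg at h
    have : r * m ≤ r * 1 := Nat.mul_le_mul_left _ (by omega)
    omega
  obtain ⟨i₀, hi₀, j₀, hj₀, hij₀⟩ := Finset.one_lt_card.mp (by omega : 1 < I.card)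
  have hmemI : ∀ i, i ∈ I → w i = w₀ := fun i hi => (Finset.mem_filter.mp hi).2
  have hw₀supp : ∀ i, i ∈ I → w₀ ∈ (P i).support := by
    intro i hi
    have h1 : w i ∈ (P i).support := hQs i _ ((Q i).end_mem_support)
    rwa [hmemI i hi] at h1
  have hw₀T : w₀ ∈ T := by
    have := (hD i₀ j₀ hij₀).2 w₀ (hw₀supp _ hi₀) (hw₀supp _ hj₀)
    simp only [Set.mem_union, Set.mem_insert_iff, Set.mem_singleton_iff] at this
    rcases this with h | h | h
    · exact h
    · exact h ▸ htT
    · exact h ▸ hc₀T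
  set G' := delVerts G ((V' ∪ C ∩ T)ᶜ) with hG'
  have hw₀mem : w₀ ∈ V' ∪ C ∩ T := Or.inr ⟨hw₀C, hw₀T⟩
  have hedge : ∀ i, i ∈ I → ∀ e ∈ (Q i).edges, e ∈ G'.edgeSet := by
    intro i hi e
    induction e using Sym2.ind with
    | _ x y =>
      intro he
      have hadj : G.Adj x y := (Q i).adj_of_mem_edges he
      have hx : x ∈ V' ∪ C ∩ T := by
        rcases hQV i x ((Q i).fst_mem_support_of_mem_edges he) with h | h
        · rw [h, hmemI i hi]; exact hw₀mem
        · exact Or.inl h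
      have hy : y ∈ V' ∪ C ∩ T := by
        rcases hQV i y ((Q i).snd_mem_support_of_mem_edges he) with h | h
        · rw [h, hmemI i hi]; exact hw₀mem
        · exact Or.inl h
      rw [hG', SimpleGraph.mem_edgeSet]
      unfold delVerts
      rw [SimpleGraph.fromRel_adj]
      refine ⟨hadj.ne, Or.inl ⟨hadj, ?_, ?_⟩⟩
      · simp only [Set.mem_compl_iff, not_not]; exact hx
      · simp only [Set.mem_compl_iff, not_not]; exact hy
  have key : ∀ i : {i // i ∈ I}, ∃ R : G'.Walk t w₀, R.IsPath ∧
      R.edges = (Q i.1).edges ∧ R.support = (Q i.1).support := by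
    intro i
    have hwi : w i.1 = w₀ := hmemI _ i.2
    refine ⟨((Q i.1).copy rfl hwi).transfer G' (by
      intro e he
      rw [Walk.edges_copy] at he
      exact hedge i.1 i.2 e he), ?_, ?_, ?_⟩
    · apply Walk.IsPath.transfer
      rw [Walk.isPath_copy]
      exact hQp _ (hP _)
    · rw [Walk.edges_transfer, Walk.edges_copy]
    · rw [Walk.support_transfer, Walk.support_copy]
  choose R hRp hRe hRs using key
  have hHEP : HasElemPaths G' T t w₀ m := by
    refine ⟨fun i => R (I.equivFin.symm i), fun i => hRp _, ?_⟩
    intro i j hij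
    have hne : (I.equivFin.symm i) ≠ I.equivFin.symm j :=
      fun h => hij (I.equivFin.symm.injective h)
    have hab : ((I.equivFin.symm i : {i // i ∈ I}) : Fin k) ≠
        ((I.equivFin.symm j : {i // i ∈ I}) : Fin k) := fun h => hne (Subtype.ext h)
    constructor
    · intro e he1 he2
      rw [hRe] at he1 he2
      exact (hD _ _ hab).1 e (hQe _ e he1) (hQe _ e he2)
    · intro x hx1 hx2
      rw [hRs] at hx1 hx2
      have := (hD _ _ hab).2 x (hQs _ _ hx1) (hQs _ _ hx2)
      simp only [Set.mem_union, Set.mem_insert_iff, Set.mem_singleton_iff] at this ⊢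
      rcases this with h | h | h
      · exact Or.inl h
      · exact Or.inr (Or.inl h)
      · exact Or.inl (h ▸ hc₀T)
  refine ⟨w₀, ⟨hw₀C, hw₀T⟩, ?_⟩
  have htw₀ : t ≠ w₀ := fun h => hV'C t htV' (h ▸ hw₀C)
  have hle : m ≤ elemConn G' T t w₀ := le_csSup (bddAbove_hasElemPaths htw₀) hHEP
  have hkm' : k ≤ r * elemConn G' T t w₀ := le_trans hkm (Nat.mul_le_mul_left _ hle)
  rw [div_le_iff₀ (by exact_mod_cast hr0 : (0:ℝ) < r)]
  calc (k:ℝ) ≤ r * elemConn G' T t w₀ := by exact_mod_cast hkm'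
    _ = (elemConn G' T t w₀ : ℝ) * r := by ring
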